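/- Let V be an F-vector space and 𝓛 a series in V with stability group S(𝓛) = {g ∈ GL(V) : [T,g] ≤ B for every jump (B,T) of 𝓛}. Let F(𝓛) = {g ∈ S(𝓛) : g stabilizes some finite subseries of 𝓛}. Then F(𝓛) is a normal subgroup of S(𝓛), and for every g ∈ F(𝓛), the normal closure g^{S(𝓛)} stabilizes the same finite subseries that g stabilizes; in particular g^{S(𝓛)} is nilpotent. -/

import Mathlib

section Defs

variable {F V : Type*} [Field F] [AddCommGroup V] [Module F V]

/-- A *series* in a vector space `V`. -/
def IsSeries (𝓛 : Set (Submodule F V)) : Prop :=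
  ⊥ ∈ 𝓛 ∧ ⊤ ∈ 𝓛 ∧ IsChain (· ≤ ·) 𝓛 ∧
    ∀ 𝓕 : Set (Submodule F V), 𝓕 ⊆ 𝓛 → 𝓕.Nonempty → sInf 𝓕 ∈ 𝓛 ∧ sSup 𝓕 ∈ 𝓛

/-- `(B, T)` is a *jump* of the series `𝓛`. -/
def IsJump (𝓛 : Set (Submodule F V)) (B T : Submodule F V) : Prop :=
  B ∈ 𝓛 ∧ T ∈ 𝓛 ∧ B < T ∧ ∀ U ∈ 𝓛, B ≤ U → U ≤ T → U = B ∨ U = T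

/-- The *stability group* `S(𝓛)` of a series `𝓛`: all invertible linear maps acting
trivially on every jump quotient, i.e. with `[T, g] ≤ B` for every jump `(B, T)`. -/
def stab (𝓛 : Set (Submodule F V)) : Set (V ≃ₗ[F] V) :=
  {g | ∀ B T : Submodule F V, IsJump 𝓛 B T → ∀ x ∈ T, g x - x ∈ B}

/-- `g` stabilizes the finite series `⊥ = W 0 ≤ W 1 ≤ ⋯ ≤ W n = ⊤`. -/
def StabFin (g : V ≃ₗ[F] V) (n : ℕ) (W : Fin (n + 1) → Submodule F V) : Prop :=
  W 0 = ⊥ ∧ W (Fin.last n) = ⊤ ∧ Monotone W ∧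
    ∀ i : Fin n, ∀ x ∈ W i.succ, g x - x ∈ W i.castSucc

/-- `F(𝓛)`: the elements of `S(𝓛)` stabilizing some finite subseries of `𝓛`. -/
def FSet (𝓛 : Set (Submodule F V)) : Set (V ≃ₗ[F] V) :=
  {g ∈ stab 𝓛 | ∃ (n : ℕ) (W : Fin (n + 1) → Submodule F V),
    (∀ i, W i ∈ 𝓛) ∧ StabFin g n W}

end Defs

section DpropSec

set_option linter.unnecessarySimpa false



variable {F V : Type*} [Field F] [AddCommGroup V] [Module F V]
variable {n : ℕ} {W : Fin (n + 1) → Submodule F V}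
open scoped commutatorElement

def Dprop (n : ℕ) (W : Fin (n + 1) → Submodule F V) (k : ℕ) (g : V ≃ₗ[F] V) : Prop :=
  ∀ i : Fin (n + 1), ∀ x ∈ W i, g x - x ∈ W ⟨i.val - k, lt_of_le_of_lt (Nat.sub_le _ _) i.isLt⟩

lemma StabFin.dprop1 {g : V ≃ₗ[F] V} (h : StabFin g n W) : Dprop n W 1 g := by
  rintro ⟨iv, hiv⟩ x hx
  match iv, hiv with
  | 0, hiv =>
    have hx0 : x ∈ (⊥ : Submodule F V) := h.1 ▸ hx
    rw [Submodule.mem_bot] at hx0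
    subst hx0
    simpa using Submodule.zero_mem _
  | m + 1, hiv =>
    have hm : m < n := by omega
    have := h.2.2.2 ⟨m, hm⟩ x hx
    exact this

lemma dprop1_stabfin {g : V ≃ₗ[F] V} (hW0 : W 0 = ⊥) (hlast : W (Fin.last n) = ⊤)
    (hmono : Monotone W) (h : Dprop n W 1 g) : StabFin g n W := by
  refine ⟨hW0, hlast, hmono, fun i x hx => ?_⟩
  have h2 := h i.succ x hx
  have hfe : (⟨(i.succ : Fin (n + 1)).val - 1, lt_of_le_of_lt (Nat.sub_le _ _) (i.succ).isLt⟩ : Fin (n + 1)) = i.castSucc := by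
    apply Fin.ext; simp
  rw [hfe] at h2
  exact h2

lemma Dprop.mono_k {g : V ≃ₗ[F] V} {k k' : ℕ} (hmono : Monotone W) (hkk : k' ≤ k)
    (h : Dprop n W k g) : Dprop n W k' g := by
  intro i x hx
  exact hmono (by simp only [Fin.le_def, Fin.val_mk]; omega) (h i x hx)

lemma Dprop.inv_map_mem {g : V ≃ₗ[F] V} (hlast : W (Fin.last n) = ⊤) (hmono : Monotone W)
    (hg : Dprop n W 1 g) (i : Fin (n + 1)) {x : V} (hx : x ∈ W i) : g⁻¹ x ∈ W i := by
  set y := g⁻¹ x with hydef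
  have hgy : g y = x := g.apply_symm_apply x
  have key : ∀ m : ℕ, ∀ j : Fin (n + 1), j.val ≤ m → y ∈ W j → y ∈ W i := by
    intro m
    induction m with
    | zero =>
      intro j hj hyj
      exact hmono (by simp only [Fin.le_def, Fin.val_mk]; omega) hyj
    | succ m ih =>
      intro j hj hyj
      by_cases hji : j ≤ i
      · exact hmono hji hyj
      · have hij : i.val < j.val := Fin.lt_def.mp (lt_of_not_ge hji)
        have hlt : j.val - 1 < n + 1 := lt_of_le_of_lt (Nat.sub_le _ _) j.isLt
        have h1 : g y - y ∈ W ⟨j.val - 1, hlt⟩ := hg j y hyj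
        have hxW : x ∈ W ⟨j.val - 1, hlt⟩ :=
          hmono (Fin.le_def.mpr (by simp only [Fin.val_mk]; omega)) hx
        have hyW : y ∈ W ⟨j.val - 1, hlt⟩ := by
          have heq : y = x - (g y - y) := by rw [hgy]; abel
          exact heq ▸ sub_mem hxW h1
        exact ih ⟨j.val - 1, hlt⟩ (by simp only [Fin.val_mk]; omega) hyW
  exact key (n + 1) (Fin.last n) (by simp) (by rw [hlast]; trivial)

lemma Dprop.one {k : ℕ} : Dprop n W k (1 : V ≃ₗ[F] V) := by
  intro i x hx
  simpa using Submodule.zero_mem _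

lemma Dprop.mul {g h : V ≃ₗ[F] V} {k : ℕ} (hmono : Monotone W)
    (hg : Dprop n W k g) (hh : Dprop n W k h) : Dprop n W k (g * h) := by
  intro i x hx
  have h1 : h x - x ∈ W ⟨i.val - k, _⟩ := hh i x hx
  have hhx : h x ∈ W i := by
    have : h x = (h x - x) + x := by abel
    rw [this]
    exact add_mem (hmono (by simp only [Fin.le_def, Fin.val_mk]; omega) h1) hx
  have h2 : g (h x) - h x ∈ W ⟨i.val - k, _⟩ := hg i (h x) hhx
  have heq : (g * h) x - x = (g (h x) - h x) + (h x - x) := by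
    show g (h x) - x = _; abel
  rw [heq]; exact add_mem h2 h1

lemma Dprop.inv {g : V ≃ₗ[F] V} {k : ℕ} (hlast : W (Fin.last n) = ⊤) (hmono : Monotone W)
    (hk : 1 ≤ k) (hg : Dprop n W k g) : Dprop n W k g⁻¹ := by
  intro i x hx
  have hy : g⁻¹ x ∈ W i := Dprop.inv_map_mem hlast hmono (hg.mono_k hmono hk) i hx
  have h1 : g (g⁻¹ x) - g⁻¹ x ∈ W ⟨i.val - k, _⟩ := hg i (g⁻¹ x) hy
  have hgy : g (g⁻¹ x) = x := g.apply_symm_apply x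
  rw [hgy] at h1
  have heq : g⁻¹ x - x = -(x - g⁻¹ x) := by abel
  rw [heq]; exact neg_mem h1

lemma Dprop.commutator {a b : V ≃ₗ[F] V} {k : ℕ} (hlast : W (Fin.last n) = ⊤)
    (hmono : Monotone W) (hk : 1 ≤ k) (ha : Dprop n W k a) (hb : Dprop n W 1 b) :
    Dprop n W (k + 1) ⁅a, b⁆ := by
  intro i x hx
  have ha1 : Dprop n W 1 a := ha.mono_k hmono hk
  have hbx : b⁻¹ x ∈ W i := Dprop.inv_map_mem hlast hmono hb i hx
  set z := a⁻¹ (b⁻¹ x) with hzdef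
  have hz : z ∈ W i := Dprop.inv_map_mem hlast hmono ha1 i hbx
  -- memberships
  have hw1 : b z - z ∈ W ⟨i.val - 1, lt_of_le_of_lt (Nat.sub_le _ _) i.isLt⟩ := hb i z hz
  have hw1' : b z - z ∈ W i := hmono (by simp only [Fin.le_def, Fin.val_mk]; omega) hw1
  have hm1 : a (b z - z) - (b z - z) ∈ W ⟨i.val - (k + 1), lt_of_le_of_lt (Nat.sub_le _ _) i.isLt⟩ := by
    have := ha ⟨i.val - 1, lt_of_le_of_lt (Nat.sub_le _ _) i.isLt⟩ (b z - z) hw1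
    have hfineq : (⟨i.val - 1 - k, lt_of_le_of_lt (le_trans (Nat.sub_le _ _) (Nat.sub_le _ _)) i.isLt⟩ : Fin (n + 1)) = (⟨i.val - (k + 1), lt_of_le_of_lt (Nat.sub_le _ _) i.isLt⟩ : Fin (n + 1)) := by
      apply Fin.ext; simp only [Fin.val_mk]; omega
    exact hfineq ▸ this
  have hw2 : a z - z ∈ W ⟨i.val - k, lt_of_le_of_lt (Nat.sub_le _ _) i.isLt⟩ := ha i z hz
  have hw2' : a z - z ∈ W i := hmono (by simp only [Fin.le_def, Fin.val_mk]; omega) hw2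
  have hm2 : b (a z - z) - (a z - z) ∈ W ⟨i.val - (k + 1), lt_of_le_of_lt (Nat.sub_le _ _) i.isLt⟩ := by
    have := hb ⟨i.val - k, lt_of_le_of_lt (Nat.sub_le _ _) i.isLt⟩ (a z - z) hw2
    have hfineq : (⟨i.val - k - 1, lt_of_le_of_lt (le_trans (Nat.sub_le _ _) (Nat.sub_le _ _)) i.isLt⟩ : Fin (n + 1)) = (⟨i.val - (k + 1), lt_of_le_of_lt (Nat.sub_le _ _) i.isLt⟩ : Fin (n + 1)) := by
      apply Fin.ext; simp only [Fin.val_mk]; omega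
    exact hfineq ▸ this
  -- the algebraic identity
  have haz : a z = b⁻¹ x := a.apply_symm_apply _
  have hbaz : b (a z) = x := by rw [haz]; exact b.apply_symm_apply x
  have heval : ⁅a, b⁆ x = a (b z) := by
    show a (b (a⁻¹ (b⁻¹ x))) = a (b z)
    rw [hzdef]
  have hident : ⁅a, b⁆ x - x = (a (b z - z) - (b z - z)) - (b (a z - z) - (a z - z)) := by
    rw [heval, ← hbaz]
    simp only [map_sub]
    abel
  rw [hident]
  exact sub_mem hm1 hm2

def Dgrp (n : ℕ) (W : Fin (n + 1) → Submodule F V) (hlast : W (Fin.last n) = ⊤)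
    (hmono : Monotone W) (k : ℕ) (hk : 1 ≤ k) : Subgroup (V ≃ₗ[F] V) where
  carrier := {g | Dprop n W k g}
  one_mem' := Dprop.one
  mul_mem' := fun hg hh => Dprop.mul hmono hg hh
  inv_mem' := fun hg => Dprop.inv hlast hmono hk hg


end DpropSec

section Aux

set_option linter.unnecessarySimpa false



variable {F V : Type*} [Field F] [AddCommGroup V] [Module F V]
variable {𝓛 : Set (Submodule F V)}

lemma exists_jump (hser : IsSeries 𝓛) {x : V} (hx : ∃ U ∈ 𝓛, x ∉ U) :
    ∃ B T : Submodule F V, IsJump 𝓛 B T ∧ x ∈ T ∧ x ∉ B ∧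
      (∀ U ∈ 𝓛, x ∉ U → U ≤ B) ∧ (∀ U ∈ 𝓛, x ∈ U → T ≤ U) := by
  obtain ⟨hbot, htop, hchain, hclosed⟩ := hser
  set S1 : Set (Submodule F V) := {A | A ∈ 𝓛 ∧ x ∉ A} with hS1def
  set S2 : Set (Submodule F V) := {A | A ∈ 𝓛 ∧ x ∈ A} with hS2def
  have hS1sub : S1 ⊆ 𝓛 := fun A hA => hA.1
  have hS2sub : S2 ⊆ 𝓛 := fun A hA => hA.1
  obtain ⟨U0, hU0, hxU0⟩ := hx
  have hS1ne : S1.Nonempty := ⟨U0, hU0, hxU0⟩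
  have hS2ne : S2.Nonempty := ⟨⊤, htop, trivial⟩
  set B := sSup S1 with hBdef
  set T := sInf S2 with hTdef
  have hB : B ∈ 𝓛 := (hclosed S1 hS1sub hS1ne).2
  have hT : T ∈ 𝓛 := (hclosed S2 hS2sub hS2ne).1
  have hxT : x ∈ T := Submodule.mem_sInf.2 fun A hA => hA.2
  have hdir : DirectedOn (· ≤ ·) S1 := (hchain.mono hS1sub).directedOn
  have hxB : x ∉ B := by
    rw [hBdef, Submodule.mem_sSup_of_directed hS1ne hdir]
    rintro ⟨A, hA, hxA⟩; exact hA.2 hxA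
  have hle1 : ∀ U ∈ 𝓛, x ∉ U → U ≤ B := fun U hU hxU => le_sSup ⟨hU, hxU⟩
  have hle2 : ∀ U ∈ 𝓛, x ∈ U → T ≤ U := fun U hU hxU => sInf_le ⟨hU, hxU⟩
  have hBT : B ≤ T := by
    apply sSup_le
    intro A hA
    rcases eq_or_ne A T with h | h
    · exact h.le
    · rcases hchain hA.1 hT h with h' | h'
      · exact h'
      · exact absurd (h' hxT) hA.2
  have hBltT : B < T := lt_of_le_of_ne hBT (fun h => hxB (h ▸ hxT))
  refine ⟨B, T, ⟨hB, hT, hBltT, ?_⟩, hxT, hxB, hle1, hle2⟩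
  intro U hU hBU hUT
  by_cases hxU : x ∈ U
  · exact Or.inr (le_antisymm hUT (hle2 U hU hxU))
  · exact Or.inl (le_antisymm (hle1 U hU hxU) hBU)

lemma stab_map_mem (hser : IsSeries 𝓛) {g : V ≃ₗ[F] V} (hg : g ∈ stab 𝓛)
    {U : Submodule F V} (hU : U ∈ 𝓛) {x : V} (hx : x ∈ U) : g x ∈ U := by
  by_cases h : ∃ A ∈ 𝓛, x ∉ A
  · obtain ⟨B, T, hjump, hxT, hxB, h1, h2⟩ := exists_jump hser h
    have hgx : g x - x ∈ B := hg B T hjump x hxT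
    have hBU : B ≤ U := le_trans hjump.2.2.1.le (h2 U hU hx)
    have : g x = (g x - x) + x := by abel
    rw [this]
    exact add_mem (hBU hgx) hx
  · push_neg at h
    have hx0 : x ∈ (⊥ : Submodule F V) := h ⊥ hser.1
    rw [Submodule.mem_bot] at hx0
    subst hx0
    simpa using Submodule.zero_mem U

lemma stab_inv_map_mem (hser : IsSeries 𝓛) {g : V ≃ₗ[F] V} (hg : g ∈ stab 𝓛)
    {U : Submodule F V} (hU : U ∈ 𝓛) {x : V} (hx : x ∈ U) : g⁻¹ x ∈ U := by
  by_contra hyU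
  set y := g⁻¹ x with hydef
  obtain ⟨B, T, hjump, hyT, hyB, h1, h2⟩ := exists_jump hser ⟨U, hU, hyU⟩
  have hgy : g y - y ∈ B := hg B T hjump y hyT
  have hgyx : g y = x := g.apply_symm_apply x
  have hUB : U ≤ B := h1 U hU hyU
  have : y = x - (g y - y) := by rw [hgyx]; abel
  exact hyB (this ▸ sub_mem (hUB hx) hgy)

lemma stab_one : (1 : V ≃ₗ[F] V) ∈ stab 𝓛 := by
  intro B T _ x _
  simpa using Submodule.zero_mem B

lemma stab_mul {g h : V ≃ₗ[F] V} (hg : g ∈ stab 𝓛) (hh : h ∈ stab 𝓛) :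
    g * h ∈ stab 𝓛 := by
  intro B T hjump x hx
  have h1 : h x - x ∈ B := hh B T hjump x hx
  have hhx : h x ∈ T := by
    have : h x = (h x - x) + x := by abel
    rw [this]; exact add_mem (hjump.2.2.1.le h1) hx
  have h2 : g (h x) - h x ∈ B := hg B T hjump (h x) hhx
  have : (g * h) x - x = (g (h x) - h x) + (h x - x) := by
    show g (h x) - x = _; abel
  rw [this]; exact add_mem h2 h1

lemma stab_inv (hser : IsSeries 𝓛) {g : V ≃ₗ[F] V} (hg : g ∈ stab 𝓛) :
    g⁻¹ ∈ stab 𝓛 := by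
  intro B T hjump x hx
  have hyT : g⁻¹ x ∈ T := stab_inv_map_mem hser hg hjump.2.1 hx
  have h1 : g (g⁻¹ x) - g⁻¹ x ∈ B := hg B T hjump _ hyT
  have hgy : g (g⁻¹ x) = x := g.apply_symm_apply x
  rw [hgy] at h1
  have : g⁻¹ x - x = -(x - g⁻¹ x) := by abel
  rw [this]; exact neg_mem h1



lemma stabfin_conj {n : ℕ} {W : Fin (n + 1) → Submodule F V} (hser : IsSeries 𝓛)
    (hWmem : ∀ i, W i ∈ 𝓛) {g s : V ≃ₗ[F] V} (hs : s ∈ stab 𝓛)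
    (hgW : StabFin g n W) : StabFin (s⁻¹ * g * s) n W := by
  refine ⟨hgW.1, hgW.2.1, hgW.2.2.1, fun i x hx => ?_⟩
  have hsx : s x ∈ W i.succ := stab_map_mem hser hs (hWmem i.succ) hx
  have h1 : g (s x) - s x ∈ W i.castSucc := hgW.2.2.2 i (s x) hsx
  have h2 : s⁻¹ (g (s x) - s x) ∈ W i.castSucc :=
    stab_inv_map_mem hser hs (hWmem i.castSucc) h1
  have heq : (s⁻¹ * g * s) x - x = s⁻¹ (g (s x) - s x) := by
    have hsx' : s⁻¹ (s x) = x := s.symm_apply_apply x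
    show s⁻¹ (g (s x)) - x = _
    rw [map_sub, hsx']
  rw [heq]
  exact h2

lemma StabFin.inv {n : ℕ} {W : Fin (n + 1) → Submodule F V} {g : V ≃ₗ[F] V}
    (hgW : StabFin g n W) : StabFin g⁻¹ n W :=
  dprop1_stabfin hgW.1 hgW.2.1 hgW.2.2.1
    (Dprop.inv hgW.2.1 hgW.2.2.1 le_rfl hgW.dprop1)

lemma StabFin.mul {n : ℕ} {W : Fin (n + 1) → Submodule F V} {g h : V ≃ₗ[F] V}
    (hgW : StabFin g n W) (hhW : StabFin h n W) : StabFin (g * h) n W :=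
  dprop1_stabfin hgW.1 hgW.2.1 hgW.2.2.1
    (Dprop.mul hgW.2.2.1 hgW.dprop1 hhW.dprop1)

end Aux

theorem stmt8 {F V : Type*} [Field F] [AddCommGroup V] [Module F V]
    (𝓛 : Set (Submodule F V)) (hser : IsSeries 𝓛) :
    FSet 𝓛 ⊆ stab 𝓛 ∧ (1 : V ≃ₗ[F] V) ∈ FSet 𝓛 ∧
    (∀ g ∈ FSet 𝓛, g⁻¹ ∈ FSet 𝓛) ∧
    (∀ g ∈ FSet 𝓛, ∀ h ∈ FSet 𝓛, g * h ∈ FSet 𝓛) ∧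
    (∀ g ∈ FSet 𝓛, ∀ s ∈ stab 𝓛, s⁻¹ * g * s ∈ FSet 𝓛) ∧
    ∀ g ∈ FSet 𝓛, ∀ (n : ℕ) (W : Fin (n + 1) → Submodule F V),
      (∀ i, W i ∈ 𝓛) → StabFin g n W →
      (∀ x ∈ Subgroup.closure {c : V ≃ₗ[F] V | ∃ s ∈ stab 𝓛, c = s⁻¹ * g * s},
        StabFin x n W) ∧
      Group.IsNilpotent
        ↥(Subgroup.closure {c : V ≃ₗ[F] V | ∃ s ∈ stab 𝓛, c = s⁻¹ * g * s}) := by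
  refine ⟨fun g hg => hg.1, ?one, ?inv, ?mul, ?conj, ?main⟩
  case one =>
    refine ⟨stab_one, 1, fun i => if i = 0 then ⊥ else ⊤, ?_, ?_, ?_, ?_, ?_⟩
    · intro i
      by_cases h : i = 0 <;> simp [h, hser.1, hser.2.1]
    · simp
    · have : (Fin.last 1 : Fin 2) ≠ 0 := by decide
      simp [this]
    · intro i j hij
      by_cases hi : i = 0
      · simp [hi]
      · have hj : j ≠ 0 := by
          intro hj0
          subst hj0
          exact hi (Fin.le_zero_iff.mp hij)
        simp [hi, hj]
    · intro i x hx
      simpa using Submodule.zero_mem _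
  case inv =>
    rintro g ⟨hgs, n, W, hWmem, hgW⟩
    exact ⟨stab_inv hser hgs, n, W, hWmem, hgW.inv⟩
  case mul =>
    rintro g ⟨hgs, n, W, hWmem, hgW⟩ h ⟨hhs, n', W', hW'mem, hhW'⟩
    refine ⟨stab_mul hgs hhs, n + n', ?_⟩
    set S : ℕ → Set (Submodule F V) := fun k =>
      {A | ∃ i : Fin (n + 1), ∃ j : Fin (n' + 1), i.val + j.val ≤ k ∧ A = W i ⊓ W' j}
      with hSdef
    have hSsub : ∀ k, S k ⊆ 𝓛 := by
      rintro k A ⟨i, j, hij, rfl⟩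
      rcases eq_or_ne (W i) (W' j) with he | he
      · rw [he, inf_idem]; exact hW'mem j
      · rcases hser.2.2.1 (hWmem i) (hW'mem j) he with hle | hle
        · rw [inf_eq_left.mpr hle]; exact hWmem i
        · rw [inf_eq_right.mpr hle]; exact hW'mem j
    have hSne : ∀ k, (S k).Nonempty := fun k => ⟨W 0 ⊓ W' 0, 0, 0, by simp, rfl⟩
    have hSdir : ∀ k, DirectedOn (· ≤ ·) (S k) :=
      fun k => ((hser.2.2.1).mono (hSsub k)).directedOn
    set M : Fin (n + n' + 1) → Submodule F V := fun k => sSup (S k.val) with hMdef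
    have hMmem : ∀ k, M k ∈ 𝓛 := fun k => (hser.2.2.2 _ (hSsub _) (hSne _)).2
    have hM0 : M 0 = ⊥ := by
      apply le_antisymm _ bot_le
      apply sSup_le
      rintro A ⟨i, j, hij, rfl⟩
      have hi0 : i = 0 := Fin.ext (by simpa using Nat.le_zero.mp (le_trans (Nat.le_add_right _ _) hij))
      calc W i ⊓ W' j ≤ W i := inf_le_left
        _ = ⊥ := by rw [hi0, hgW.1]
    have hMlast : M (Fin.last (n + n')) = ⊤ := by
      apply le_antisymm le_top
      have hmem : W (Fin.last n) ⊓ W' (Fin.last n') ∈ S (Fin.last (n + n')).val :=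
        ⟨Fin.last n, Fin.last n', by simp, rfl⟩
      have h1 := le_sSup hmem
      rwa [hgW.2.1, hhW'.2.1, inf_idem] at h1
    have hMmono : Monotone M := by
      intro k k' hkk
      apply sSup_le_sSup
      rintro A ⟨i, j, hij, hA⟩
      exact ⟨i, j, le_trans hij (Fin.le_def.mp hkk), hA⟩
    have hgM : ∀ p : Fin (n + n'), ∀ x ∈ M p.succ, g x - x ∈ M p.castSucc := by
      intro p x hx
      rw [hMdef] at hx
      rw [Submodule.mem_sSup_of_directed (hSne _) (hSdir _)] at hx
      obtain ⟨A, ⟨i, j, hij, rfl⟩, hxA⟩ := hx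
      obtain ⟨hx1, hx2⟩ := Submodule.mem_inf.mp hxA
      rcases Nat.eq_zero_or_pos i.val with hi | hi
      · have hi0 : i = 0 := Fin.ext (by simpa using hi)
        rw [hi0, hgW.1] at hx1
        rw [Submodule.mem_bot] at hx1
        subst hx1
        simpa using Submodule.zero_mem _
      · have hlt : i.val - 1 < n := by
          have := i.isLt; omega
        have hisucc : (⟨i.val - 1, hlt⟩ : Fin n).succ = i := Fin.ext (by simp; omega)
        have h1 : g x - x ∈ W (⟨i.val - 1, hlt⟩ : Fin n).castSucc :=
          hgW.2.2.2 ⟨i.val - 1, hlt⟩ x (by rw [hisucc]; exact hx1)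
        have h2 : g x - x ∈ W' j := by
          have hgx : g x ∈ W' j := stab_map_mem hser hgs (hW'mem j) hx2
          exact sub_mem hgx hx2
        have hmemS : W (⟨i.val - 1, hlt⟩ : Fin n).castSucc ⊓ W' j ∈ S p.castSucc.val := by
          refine ⟨(⟨i.val - 1, hlt⟩ : Fin n).castSucc, j, ?_, rfl⟩
          have := Fin.val_succ p
          simp only [Fin.coe_castSucc, Fin.val_succ] at hij ⊢
          omega
        exact le_sSup hmemS (Submodule.mem_inf.mpr ⟨h1, h2⟩)
    have hhM : ∀ p : Fin (n + n'), ∀ x ∈ M p.succ, h x - x ∈ M p.castSucc := by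
      intro p x hx
      rw [hMdef] at hx
      rw [Submodule.mem_sSup_of_directed (hSne _) (hSdir _)] at hx
      obtain ⟨A, ⟨i, j, hij, rfl⟩, hxA⟩ := hx
      obtain ⟨hx1, hx2⟩ := Submodule.mem_inf.mp hxA
      rcases Nat.eq_zero_or_pos j.val with hj | hj
      · have hj0 : j = 0 := Fin.ext (by simpa using hj)
        rw [hj0, hhW'.1] at hx2
        rw [Submodule.mem_bot] at hx2
        subst hx2
        simpa using Submodule.zero_mem _
      · have hlt : j.val - 1 < n' := by
          have := j.isLt; omega
        have hjsucc : (⟨j.val - 1, hlt⟩ : Fin n').succ = j := Fin.ext (by simp; omega)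
        have h1 : h x - x ∈ W' (⟨j.val - 1, hlt⟩ : Fin n').castSucc :=
          hhW'.2.2.2 ⟨j.val - 1, hlt⟩ x (by rw [hjsucc]; exact hx2)
        have h2 : h x - x ∈ W i := by
          have hhx : h x ∈ W i := stab_map_mem hser hhs (hWmem i) hx1
          exact sub_mem hhx hx1
        have hmemS : W i ⊓ W' (⟨j.val - 1, hlt⟩ : Fin n').castSucc ∈ S p.castSucc.val := by
          refine ⟨i, (⟨j.val - 1, hlt⟩ : Fin n').castSucc, ?_, rfl⟩
          simp only [Fin.coe_castSucc, Fin.val_succ] at hij ⊢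
          omega
        exact le_sSup hmemS (Submodule.mem_inf.mpr ⟨h2, h1⟩)
    have hgMs : StabFin g (n + n') M := ⟨hM0, hMlast, hMmono, hgM⟩
    have hhMs : StabFin h (n + n') M := ⟨hM0, hMlast, hMmono, hhM⟩
    exact ⟨M, hMmem, hgMs.mul hhMs⟩
  case conj =>
    rintro g ⟨hgs, n, W, hWmem, hgW⟩ s hs
    exact ⟨stab_mul (stab_mul (stab_inv hser hs) hgs) hs, n, W, hWmem,
      stabfin_conj hser hWmem hs hgW⟩
  case main =>
    intro g hg n W hWmem hsf
    have hW0 := hsf.1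
    have hlast := hsf.2.1
    have hmono := hsf.2.2.1
    set H := Subgroup.closure {c : V ≃ₗ[F] V | ∃ s ∈ stab 𝓛, c = s⁻¹ * g * s} with hHdef
    have hgen : ∀ c ∈ {c : V ≃ₗ[F] V | ∃ s ∈ stab 𝓛, c = s⁻¹ * g * s},
        c ∈ Dgrp n W hlast hmono 1 le_rfl := by
      rintro c ⟨s, hs, rfl⟩
      exact (stabfin_conj hser hWmem hs hsf).dprop1
    have hH1 : H ≤ Dgrp n W hlast hmono 1 le_rfl := (Subgroup.closure_le _).mpr hgen
    refine ⟨fun x hx => dprop1_stabfin hW0 hlast hmono (hH1 hx), ?_⟩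
    have key : ∀ k : ℕ, Subgroup.map H.subtype ((⊤ : Subgroup H).lowerCentralSeries k) ≤
        Dgrp n W hlast hmono (k + 1) (Nat.le_add_left 1 k) := by
      intro k
      induction k with
      | zero =>
        rw [Subgroup.lowerCentralSeries_zero, ← MonoidHom.range_eq_map, Subgroup.range_subtype]
        exact hH1
      | succ k ih =>
        have h1 : (⊤ : Subgroup H).lowerCentralSeries (k + 1) = ⁅(⊤ : Subgroup H).lowerCentralSeries k, ⊤⁆ := rfl
        rw [h1, Subgroup.map_commutator, Subgroup.commutator_le]
        intro a ha b hb
        have haD : Dprop n W (k + 1) a := ih ha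
        have hbD : Dprop n W 1 b := by
          have hbH : b ∈ H := by
            rwa [← MonoidHom.range_eq_map, Subgroup.range_subtype] at hb
          exact hH1 hbH
        exact Dprop.commutator hlast hmono (Nat.le_add_left 1 k) haD hbD
    have hbot : (⊤ : Subgroup H).lowerCentralSeries n = ⊥ := by
      rw [eq_bot_iff]
      intro x hx
      have hxD : Dprop n W (n + 1) (H.subtype x) :=
        key n (Subgroup.mem_map_of_mem _ hx)
      have hone : (H.subtype x : V ≃ₗ[F] V) = 1 := by
        apply LinearEquiv.toLinearMap_injective
        apply LinearMap.ext
        intro v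
        have hv : v ∈ W (Fin.last n) := by rw [hlast]; trivial
        have hm := hxD (Fin.last n) v hv
        have hidx : (⟨(Fin.last n).val - (n + 1),
            lt_of_le_of_lt (Nat.sub_le _ _) (Fin.last n).isLt⟩ : Fin (n + 1)) = 0 := by
          apply Fin.ext
          simp
        rw [hidx, hW0, Submodule.mem_bot, sub_eq_zero] at hm
        simpa using hm
      exact Subgroup.mem_bot.mpr (Subtype.ext hone)
    exact Subgroup.nilpotent_iff_lowerCentralSeries.mpr ⟨n, hbot⟩
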